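/- For real numbers μ₁, μ₂, σ₁, σ₂ with σ₁, σ₂ > 0, suppose for three distinct reals x₁, x₂, x₃ and all choices k ∈ {1,2}³ the sums ∑_{j=1}^{3} (x_j − μ_{k_j})²/(2σ_{k_j}²) take the same value. If moreover x₁ + x₂ ≠ 2x₃ (the points are in general position), then (μ₁, σ₁) = (μ₂, σ₂). -/
import Mathlib


open Real

/-- If all 8 sums ∑_{j=1}^{3}(x_j − μ_{k_j})²/(2σ_{k_j}²), for k ∈ {1,2}³, take the same
value, and the three distinct points are in general position, then the two Gaussian
components coincide. -/
theorem equal_exponents_implies_equal_components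
    (μ₁ μ₂ σ₁ σ₂ : ℝ) (hσ₁ : 0 < σ₁) (hσ₂ : 0 < σ₂)
    (x₁ x₂ x₃ : ℝ) (h12 : x₁ ≠ x₂) (h13 : x₁ ≠ x₃) (h23 : x₂ ≠ x₃)
    (hgen : x₁ + x₂ ≠ 2 * x₃)
    (hconst : ∀ k k' : Fin 3 → Fin 2,
      (∑ j, (![x₁, x₂, x₃] j - ![μ₁, μ₂] (k j)) ^ 2 / (2 * (![σ₁, σ₂] (k j)) ^ 2)) =
      (∑ j, (![x₁, x₂, x₃] j - ![μ₁, μ₂] (k' j)) ^ 2 / (2 * (![σ₁, σ₂] (k' j)) ^ 2))) :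
    μ₁ = μ₂ ∧ σ₁ = σ₂ := by
  have hσ₁' : σ₁ ≠ 0 := ne_of_gt hσ₁
  have hσ₂' : σ₂ ≠ 0 := ne_of_gt hσ₂
  have h1 := hconst ![0,0,0] ![1,0,0]
  have h2 := hconst ![0,0,0] ![0,1,0]
  have h3 := hconst ![0,0,0] ![0,0,1]
  simp [Fin.sum_univ_three] at h1 h2 h3
  have E1 : σ₂^2 * (x₁ - μ₁)^2 = σ₁^2 * (x₁ - μ₂)^2 := by
    field_simp at h1; linarith
  have E2 : σ₂^2 * (x₂ - μ₁)^2 = σ₁^2 * (x₂ - μ₂)^2 := by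
    field_simp at h2; linarith
  have E3 : σ₂^2 * (x₃ - μ₁)^2 = σ₁^2 * (x₃ - μ₂)^2 := by
    field_simp at h3; linarith
  have hA : σ₂^2 * (x₁ + x₂ - 2*μ₁) = σ₁^2 * (x₁ + x₂ - 2*μ₂) := by
    have : (x₁ - x₂) * (σ₂^2 * (x₁ + x₂ - 2*μ₁) - σ₁^2 * (x₁ + x₂ - 2*μ₂)) = 0 := by
      linear_combination E1 - E2
    rcases mul_eq_zero.1 this with h | h
    · exact absurd (sub_eq_zero.1 h) h12
    · linarith [sub_eq_zero.1 h]
  have hB : σ₂^2 * (x₁ + x₃ - 2*μ₁) = σ₁^2 * (x₁ + x₃ - 2*μ₂) := by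
    have : (x₁ - x₃) * (σ₂^2 * (x₁ + x₃ - 2*μ₁) - σ₁^2 * (x₁ + x₃ - 2*μ₂)) = 0 := by
      linear_combination E1 - E3
    rcases mul_eq_zero.1 this with h | h
    · exact absurd (sub_eq_zero.1 h) h13
    · linarith [sub_eq_zero.1 h]
  have hsq : σ₂^2 = σ₁^2 := by
    have : (x₂ - x₃) * (σ₂^2 - σ₁^2) = 0 := by linear_combination hA - hB
    rcases mul_eq_zero.1 this with h | h
    · exact absurd (sub_eq_zero.1 h) h23
    · linarith [sub_eq_zero.1 h]
  have hσ : σ₁ = σ₂ := by nlinarith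
  have hμ : μ₁ = μ₂ := by
    have h := hA
    rw [hsq] at h
    have h' : σ₁^2 * (2*μ₂ - 2*μ₁) = 0 := by linear_combination h
    rcases mul_eq_zero.1 h' with h | h
    · exact absurd h (pow_ne_zero 2 hσ₁')
    · linarith
  exact ⟨hμ, hσ⟩
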